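/- Let p ≡ 1 (mod 4) be prime and (a,p) = 1. Then S(0) = ∑_{μ=0}^{p-1} ∑_{ν=0}^{p-1} μ χ(ν) ⌊(aμ + ν)/p⌋ satisfies S(0) ≡ (χ(a) − 1)/2 (mod 2); i.e., S(0) is even if a is a quadratic residue mod p and odd otherwise. -/

import Mathlib

lemma sum_emod_range (p : ℕ) (hp : 0 < p) (x : ℤ) :
    ∑ ν ∈ Finset.range p, (x + ν) % (p : ℤ) = ∑ ν ∈ Finset.range p, (ν : ℤ) := by
  have hP : (0:ℤ) < (p:ℤ) := by exact_mod_cast hp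
  refine Finset.sum_nbij' (fun ν => ((x + ν) % (p:ℤ)).toNat)
    (fun ν => (((ν:ℤ) - x) % (p:ℤ)).toNat) ?_ ?_ ?_ ?_ ?_
  · intro ν hν
    simp only [Finset.mem_range] at *
    have h1 := Int.emod_nonneg (x + ν) hP.ne'
    have h2 := Int.emod_lt_of_pos (x + ν) hP
    omega
  · intro ν hν
    simp only [Finset.mem_range] at *
    have h1 := Int.emod_nonneg ((ν:ℤ) - x) hP.ne'
    have h2 := Int.emod_lt_of_pos ((ν:ℤ) - x) hP
    omega
  · intro ν hν
    simp only [Finset.mem_range] at hν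
    have h1 := Int.emod_nonneg (x + ν) hP.ne'
    have key : ((((x + ν) % (p:ℤ)).toNat : ℤ) - x) % (p:ℤ) = (ν:ℤ) := by
      rw [Int.toNat_of_nonneg h1, Int.sub_emod, Int.emod_emod_of_dvd _ dvd_rfl,
        ← Int.sub_emod]
      have hx : x + (ν:ℤ) - x = (ν:ℤ) := by ring
      rw [hx]
      exact Int.emod_eq_of_lt (by positivity) (by exact_mod_cast hν)
    beta_reduce
    omega
  · intro ν hν
    simp only [Finset.mem_range] at hν
    have h1 := Int.emod_nonneg ((ν:ℤ) - x) hP.ne'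
    have key : (x + ((((ν:ℤ) - x) % (p:ℤ)).toNat : ℤ)) % (p:ℤ) = (ν:ℤ) := by
      rw [Int.toNat_of_nonneg h1, Int.add_emod, Int.emod_emod_of_dvd _ dvd_rfl,
        ← Int.add_emod]
      have hx : x + ((ν:ℤ) - x) = (ν:ℤ) := by ring
      rw [hx]
      exact Int.emod_eq_of_lt (by positivity) (by exact_mod_cast hν)
    beta_reduce
    omega
  · intro ν hν
    have h1 := Int.emod_nonneg (x + ν) hP.ne'
    simp [Int.toNat_of_nonneg h1]

lemma sum_ediv_range (p : ℕ) (hp : 0 < p) (x : ℤ) :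
    ∑ ν ∈ Finset.range p, (x + ν) / (p : ℤ) = x := by
  have hP : (0:ℤ) < (p:ℤ) := by exact_mod_cast hp
  have key : (p:ℤ) * ∑ ν ∈ Finset.range p, (x + ν) / (p : ℤ) = (p:ℤ) * x := by
    rw [Finset.mul_sum]
    have h1 : ∀ ν ∈ Finset.range p, (p:ℤ) * ((x + ν) / (p:ℤ))
        = (x + ν) - (x + ν) % (p:ℤ) := by
      intro ν _
      rw [Int.emod_def]; ring
    rw [Finset.sum_congr rfl h1, Finset.sum_sub_distrib, sum_emod_range p hp x,
      Finset.sum_add_distrib, Finset.sum_const, Finset.card_range]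
    ring
  exact mul_left_cancel₀ hP.ne' key

lemma neg_ediv_eq {x P : ℤ} (hP : 0 < P) (h : ¬ P ∣ x) : (-x) / P = -(x / P) - 1 := by
  have h0 : 0 < x % P := (Int.emod_pos_of_not_dvd h).resolve_left hP.ne'
  have h1 : x % P < P := Int.emod_lt_of_pos x hP
  have hx : -x = (P - x % P) + (-(x / P) - 1) * P := by
    have := Int.mul_ediv_add_emod x P
    linarith [this]
  rw [hx, Int.add_mul_ediv_right _ _ hP.ne',
    Int.ediv_eq_zero_of_lt (by omega) (by omega)]
  ring

lemma two_mul_ediv {x P : ℤ} (hP : 0 < P) (h0 : 0 ≤ x) (h1 : x < P) :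
    (2 * x) / P = if P ≤ 2 * x then 1 else 0 := by
  split_ifs with h
  · have hx : 2 * x = (2 * x - P) + 1 * P := by ring
    rw [hx, Int.add_mul_ediv_right _ _ hP.ne',
      Int.ediv_eq_zero_of_lt (by omega) (by omega)]
    ring
  · exact Int.ediv_eq_zero_of_lt (by omega) (by omega)

lemma S0_inner_sum (p : ℕ) [Fact p.Prime] (x : ℤ) :
    ((∑ ν ∈ Finset.range p, (legendreSym p ν) * ((x + ν) / (p:ℤ)) : ℤ) : ZMod 2)
      = ((x - x / (p:ℤ) : ℤ) : ZMod 2) := by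
  have hp : p.Prime := Fact.out
  have hp0 : 0 < p := hp.pos
  push_cast
  have hχ : ∀ ν ∈ Finset.range p, ((legendreSym p (ν:ℤ) : ℤ) : ZMod 2)
      * (((x + ν) / (p:ℤ) : ℤ) : ZMod 2)
      = (((x + ν) / (p:ℤ) : ℤ) : ZMod 2)
        - (if ν = 0 then (((x + ν) / (p:ℤ) : ℤ) : ZMod 2) else 0) := by
    intro ν hν
    simp only [Finset.mem_range] at hν
    by_cases h : ν = 0
    · subst h
      simp [legendreSym.at_zero]
    · have hν0 : ((ν : ℤ) : ZMod p) ≠ 0 := by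
        rw [Int.cast_natCast, Ne, ZMod.natCast_eq_zero_iff]
        intro hdvd
        have := Nat.le_of_dvd (Nat.pos_of_ne_zero h) hdvd
        omega
      rcases legendreSym.eq_one_or_neg_one p hν0 with h1 | h1 <;>
        · rw [h1]; simp [h, CharTwo.neg_eq]
  rw [Finset.sum_congr rfl hχ, Finset.sum_sub_distrib, Finset.sum_ite_eq' (Finset.range p) 0]
  rw [← Int.cast_sum, sum_ediv_range p hp0 x]
  simp [Finset.mem_range, hp0]

theorem S_zero_mod_two (p : ℕ) [Fact p.Prime] (h4 : p % 4 = 1)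
    (a : ℤ) (ha : Int.gcd a p = 1) :
    (∑ μ ∈ Finset.range p, ∑ ν ∈ Finset.range p,
        (μ : ℤ) * legendreSym p ν * Int.fdiv (a * μ + ν) p)
      ≡ (legendreSym p a - 1) / 2 [ZMOD 2] := by
  have hp : p.Prime := Fact.out
  have hp0 : 0 < p := hp.pos
  have hp1 : 2 ≤ p := hp.two_le
  have hp2 : p % 2 = 1 := by omega
  have hpne2 : p ≠ 2 := by omega
  have hP : (0:ℤ) < (p:ℤ) := by exact_mod_cast hp0
  -- p does not divide a
  have hpa : ¬ (p:ℤ) ∣ a := by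
    intro hdvd
    have h2 : (p:ℤ) ∣ (Int.gcd a p : ℤ) := Int.natCast_dvd_natCast.mpr (Int.dvd_gcd hdvd dvd_rfl)
    rw [ha] at h2
    have := Int.le_of_dvd one_pos h2
    omega
  have ha0 : ((a:ℤ) : ZMod p) ≠ 0 := by
    rw [Ne, ZMod.intCast_zmod_eq_zero_iff_dvd]
    exact hpa
  -- go to ZMod 2
  suffices hgoal : ((∑ μ ∈ Finset.range p, ∑ ν ∈ Finset.range p,
      (μ : ℤ) * legendreSym p ν * Int.fdiv (a * μ + ν) p : ℤ) : ZMod 2)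
      = (((legendreSym p a - 1) / 2 : ℤ) : ZMod 2) by
    exact (ZMod.intCast_eq_intCast_iff _ _ 2).mp hgoal
  have hfd : ∀ μ ν : ℕ, Int.fdiv (a * μ + ν) p = (a * μ + ν) / (p:ℤ) :=
    fun μ ν => Int.fdiv_eq_ediv_of_nonneg _ hP.le
  simp only [hfd]
  rw [Int.cast_sum]
  -- Step 1: compute the inner sum over ν
  have e1 : ∀ μ ∈ Finset.range p,
      ((∑ ν ∈ Finset.range p, (μ:ℤ) * legendreSym p ν * ((a*μ+ν)/(p:ℤ)) : ℤ) : ZMod 2)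
      = (μ : ZMod 2) * ((a*μ - (a*μ)/(p:ℤ) : ℤ) : ZMod 2) := by
    intro μ _
    have hfac : (∑ ν ∈ Finset.range p, (μ:ℤ) * legendreSym p ν * ((a*↑μ+↑ν)/(p:ℤ)))
        = (μ:ℤ) * ∑ ν ∈ Finset.range p, legendreSym p ν * ((a*↑μ+↑ν)/(p:ℤ)) := by
      rw [Finset.mul_sum]
      exact Finset.sum_congr rfl (fun ν _ => by ring)
    rw [hfac, Int.cast_mul, S0_inner_sum p (a*μ), Int.cast_natCast]
  rw [Finset.sum_congr rfl e1]
  -- Step 2: kill the a*μ part using parity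
  have hμμ : ∀ x : ZMod 2, x * x = x := by decide
  have hsum0 : (∑ μ ∈ Finset.range p, (μ : ZMod 2)) = 0 := by
    have hcast : (∑ μ ∈ Finset.range p, (μ : ZMod 2))
        = ((∑ μ ∈ Finset.range p, μ : ℕ) : ZMod 2) := by push_cast; rfl
    obtain ⟨k, hk⟩ : 2 ∣ ∑ μ ∈ Finset.range p, μ := by
      have h2 := Finset.sum_range_id_mul_two p
      obtain ⟨k, hk⟩ : 4 ∣ (p-1) := by omega
      have h3 : p * (p-1) = (p*(2*k))*2 := by rw [hk]; ring
      have h4' : (∑ i ∈ Finset.range p, i) = p*(2*k) :=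
        Nat.eq_of_mul_eq_mul_right (by norm_num) (h2.trans h3)
      exact ⟨p*k, by rw [h4']; ring⟩
    rw [hcast, hk]
    push_cast
    rw [show ((2:ZMod 2)) = 0 by decide, zero_mul]
  have e4 : ∀ μ ∈ Finset.range p,
      (μ : ZMod 2) * ((a*μ - (a*μ)/(p:ℤ) : ℤ) : ZMod 2)
      = (a : ZMod 2) * (μ : ZMod 2) + (μ : ZMod 2) * (((a*μ)/(p:ℤ) : ℤ) : ZMod 2) := by
    intro μ _
    rw [Int.cast_sub, Int.cast_mul, Int.cast_natCast, CharTwo.sub_eq_add]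
    calc (μ : ZMod 2) * ((a:ZMod 2) * (μ:ZMod 2) + (((a*μ)/(p:ℤ) : ℤ) : ZMod 2))
        = (a:ZMod 2) * ((μ:ZMod 2) * (μ:ZMod 2))
          + (μ:ZMod 2) * (((a*μ)/(p:ℤ) : ℤ) : ZMod 2) := by ring
      _ = (a : ZMod 2) * (μ : ZMod 2) + (μ : ZMod 2) * (((a*μ)/(p:ℤ) : ℤ) : ZMod 2) := by
          rw [hμμ]
  rw [Finset.sum_congr rfl e4, Finset.sum_add_distrib, ← Finset.mul_sum, hsum0,
    mul_zero, zero_add]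
  -- Step 3: reindex odd μ to j with μ = p - 2j
  have h2cast : ∀ μ:ℕ, ((μ:ℕ) : ZMod 2) = if μ % 2 = 1 then 1 else 0 := by
    intro μ
    rcases Nat.mod_two_eq_zero_or_one μ with h|h <;>
      rw [← ZMod.natCast_mod μ 2, h] <;> simp
  simp only [h2cast, ite_mul, one_mul, zero_mul]
  rw [← Finset.sum_filter]
  have ebij : ∑ μ ∈ (Finset.range p).filter (fun μ => μ % 2 = 1),
      (((a*μ)/(p:ℤ) : ℤ) : ZMod 2)
      = ∑ j ∈ Finset.Ico 1 (p/2).succ,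
        (((a*((p - 2*j : ℕ)))/(p:ℤ) : ℤ) : ZMod 2) := by
    refine (Finset.sum_nbij' (fun j => p - 2*j) (fun μ => (p - μ)/2) ?_ ?_ ?_ ?_ ?_).symm
    · intro j hj
      simp only [Finset.mem_Ico, Finset.mem_filter, Finset.mem_range] at *
      omega
    · intro μ hμ
      simp only [Finset.mem_Ico, Finset.mem_filter, Finset.mem_range] at *
      omega
    · intro j hj
      simp only [Finset.mem_Ico] at hj
      show (p - (p - 2*j))/2 = j
      omega
    · intro μ hμ
      simp only [Finset.mem_filter, Finset.mem_range] at hμ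
      show p - 2*((p - μ)/2) = μ
      omega
    · intro j hj
      rfl
  rw [ebij]
  have hnd : ∀ j:ℕ, 1 ≤ j → j < p → ¬ (p:ℤ) ∣ 2*a*(j:ℤ) := by
    intro j h1 h2 hdvd
    have hpp : Prime (p:ℤ) := Nat.prime_iff_prime_int.mp hp
    rcases hpp.dvd_mul.mp hdvd with h | h
    · rcases hpp.dvd_mul.mp h with h' | h'
      · have := Int.le_of_dvd (by norm_num) h'
        omega
      · exact hpa h'
    · rw [Int.natCast_dvd_natCast] at h
      have := Nat.le_of_dvd (by omega) h
      omega
  have ediv1 : ∀ j ∈ Finset.Ico 1 (p/2).succ,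
      (((a*((p - 2*j : ℕ)))/(p:ℤ) : ℤ) : ZMod 2)
      = ((((2*a*j)/(p:ℤ)) : ℤ) : ZMod 2) + (1 + (a : ZMod 2)) := by
    intro j hj
    simp only [Finset.mem_Ico] at hj
    have h2j : 2*j ≤ p := by omega
    have hcast : ((p - 2*j : ℕ) : ℤ) = (p:ℤ) - 2*j := by
      rw [Nat.cast_sub h2j]; push_cast; ring
    have hnd' : ¬ (p:ℤ) ∣ 2*a*(j:ℤ) := hnd j hj.1 (by omega)
    have hsplit : a * ((p:ℤ) - 2*j) = (-(2*a*j)) + a*(p:ℤ) := by ring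
    rw [hcast, hsplit, Int.add_mul_ediv_right _ _ hP.ne', neg_ediv_eq hP hnd']
    rw [Int.cast_add, Int.cast_sub, Int.cast_neg, CharTwo.neg_eq]
    ring_nf
    rw [show ((-1):ZMod 2) = 1 by decide]
  rw [Finset.sum_congr rfl ediv1, Finset.sum_add_distrib, Finset.sum_const, Nat.card_Ico]
  have hhalf : (((p/2).succ - 1 : ℕ) : ZMod 2) = 0 := by
    rw [ZMod.natCast_eq_zero_iff]
    omega
  rw [nsmul_eq_mul, hhalf, zero_mul, add_zero]
  -- Step 4: each term is the Gauss-lemma indicator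
  have ediv2 : ∀ j ∈ Finset.Ico 1 (p/2).succ,
      ((((2*a*j)/(p:ℤ)) : ℤ) : ZMod 2)
      = if p / 2 < (↑a * (j:ℕ).cast : ZMod p).val then 1 else 0 := by
    intro j hj
    simp only [Finset.mem_Ico] at hj
    have hr0 : 0 ≤ (a * (j:ℤ)) % (p:ℤ) := Int.emod_nonneg _ hP.ne'
    have hr1 : (a * (j:ℤ)) % (p:ℤ) < (p:ℤ) := Int.emod_lt_of_pos _ hP
    have hsplit : 2*a*(j:ℤ)
        = 2*((a * (j:ℤ)) % (p:ℤ)) + ((a*(j:ℤ))/(p:ℤ) * 2) * (p:ℤ) := by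
      have h := Int.mul_ediv_add_emod (a*(j:ℤ)) (p:ℤ)
      linarith
    rw [hsplit, Int.add_mul_ediv_right _ _ hP.ne', two_mul_ediv hP hr0 hr1]
    have hval : (((↑a * (j:ℕ).cast : ZMod p).val : ℤ)) = (a * (j:ℤ)) % (p:ℤ) := by
      have h1 : ((a * (j:ℤ) : ℤ) : ZMod p) = (↑a * (j:ℕ).cast : ZMod p) := by
        push_cast; ring
      rw [← h1, ZMod.val_intCast]
    rw [Int.cast_add, Int.cast_mul]
    rw [show ((2:ℤ):ZMod 2) = 0 by decide, mul_zero, add_zero]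
    by_cases h : (p:ℤ) ≤ 2*((a * (j:ℤ)) % (p:ℤ))
    · rw [if_pos h, if_pos (by omega)]
      rfl
    · rw [if_neg h, if_neg (by omega)]
      rfl
  rw [Finset.sum_congr rfl ediv2, Finset.sum_boole]
  -- Step 5: Gauss' lemma
  rw [ZMod.gauss_lemma hpne2 ha0]
  rcases Nat.even_or_odd
      ((Finset.Ico 1 (p/2).succ).filter
        (fun x => p / 2 < (↑a * (x:ℕ).cast : ZMod p).val)).card with he | ho
  · rw [he.neg_one_pow]
    norm_num
    rw [ZMod.natCast_eq_zero_iff]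
    exact he.two_dvd
  · rw [ho.neg_one_pow]
    norm_num
    obtain ⟨k, hk⟩ := ho
    rw [hk]
    push_cast
    rw [show ((2:ZMod 2)) = 0 by decide, zero_mul, zero_add]
    decide
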